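/- Let W be a nonzero F-subspace of V with A*_L(W) ⊆ W and B*_L(W) ⊆ W. Then 1 ∈ W. (Moreover, for v ∈ V one has A*_L(v) = 0 and B*_L(v) = 0 if and only if v ∈ V₀ = F·1.) -/

import Mathlib

noncomputable section
namespace SqPaper

/-- The two letters: `0 ↦ A`, `1 ↦ B`. -/
abbrev Ltr := Fin 2
def lA : Ltr := 0
def lB : Ltr := 1

/-- The pairing `⟨ , ⟩` on letters: `⟨A,A⟩=⟨B,B⟩=2`, `⟨A,B⟩=⟨B,A⟩=-2`. -/
def brk (x y : Ltr) : ℤ := if x = y then 2 else -2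

variable (F : Type*) [Field F]

/-- The free algebra `V` on the two generators, realized as the monoid algebra of the
free monoid on two letters; the words form the standard basis. -/
abbrev FA := MonoidAlgebra F (FreeMonoid Ltr)

/-- The standard basis vector attached to a word (list of letters). -/
def wd (l : List Ltr) : FA F := MonoidAlgebra.single (FreeMonoid.ofList l) 1

def Agen : FA F := wd F [lA]
def Bgen : FA F := wd F [lB]

/-- View an element of `V` as a finitely supported function on words. -/
def fsp (v : FA F) : FreeMonoid Ltr →₀ F := v.coeff

/-- The symmetric bilinear form on `V` for which the standard basis of words is orthonormal. -/
def form (u v : FA F) : F := (fsp F u).sum fun w c => c * (fsp F v) w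

/-- Extend a function on words to an `F`-linear map on `V`. -/
def mkMap {M : Type*} [AddCommMonoid M] [Module F M] (f : List Ltr → M) :
    FA F →ₗ[F] M :=
  Finsupp.lsum F (fun w => LinearMap.toSpanSingleton F M (f (FreeMonoid.toList w)))
    ∘ₗ (MonoidAlgebra.coeffLinearEquiv F).toLinearMap

/-- `[3]_q = (q³ - q⁻³)/(q - q⁻¹)`. -/
def tri (q : F) : F := (q ^ 3 - q⁻¹ ^ 3) / (q - q⁻¹)

/-- The q-shuffle product on words. -/
def shufW (q : F) : List Ltr → List Ltr → FA F
  | [], v => wd F v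
  | u, [] => wd F u
  | a :: u, b :: v =>
      wd F [a] * shufW q u (b :: v) +
        (q ^ (((a :: u).map (fun x => brk x b)).sum)) • (wd F [b] * shufW q (a :: u) v)
  termination_by u v => u.length + v.length

/-- The q-shuffle product `⋆` on `V`, as a bilinear map. -/
def qshuf (q : F) : FA F →ₗ[F] FA F →ₗ[F] FA F :=
  mkMap F fun u => mkMap F fun v => shufW F q u v

/-- Iterated `⋆`-product of the letters of a word. -/
def thetaW (q : F) : List Ltr → FA F
  | [] => 1
  | a :: t => qshuf F q (wd F [a]) (thetaW q t)

/-- `θ : V → V`, the algebra homomorphism from the free algebra to the q-shuffle algebra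
with `θ(A) = A`, `θ(B) = B`. -/
def theta (q : F) : FA F →ₗ[F] FA F := mkMap F fun l => thetaW F q l

/-- `A_L`, left multiplication by `A` in the free algebra. -/
def AL : FA F →ₗ[F] FA F := LinearMap.mulLeft F (Agen F)
def BL : FA F →ₗ[F] FA F := LinearMap.mulLeft F (Bgen F)
def AR : FA F →ₗ[F] FA F := LinearMap.mulRight F (Agen F)
def BR : FA F →ₗ[F] FA F := LinearMap.mulRight F (Bgen F)

/-- `X*_L` (for the letter `x`): deletes the letter `x` from the front of a word. -/
def delL (x : Ltr) : FA F →ₗ[F] FA F :=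
  mkMap F fun l => if l.head? = some x then wd F l.tail else 0

/-- `X*_R` (for the letter `x`): deletes the letter `x` from the end of a word. -/
def delR (x : Ltr) : FA F →ₗ[F] FA F :=
  mkMap F fun l => if l.getLast? = some x then wd F l.dropLast else 0

/-- `X_ℓ`: left q-shuffle multiplication by the letter `x`. -/
def shL (q : F) (x : Ltr) : FA F →ₗ[F] FA F := qshuf F q (wd F [x])

/-- `X_r`: right q-shuffle multiplication by the letter `x`. -/
def shR (q : F) (x : Ltr) : FA F →ₗ[F] FA F := (qshuf F q).flip (wd F [x])

/-- `X*_ℓ`: the weighted deletion map, deleting an occurrence of the letter `x`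
with weight `q^{⟨v₁,x⟩+⋯+⟨v_{i-1},x⟩}`. -/
def lowL (q : F) (x : Ltr) : FA F →ₗ[F] FA F :=
  mkMap F fun l =>
    ∑ i ∈ Finset.range l.length,
      if l[i]? = some x then
        (q ^ (((l.take i).map (fun y => brk y x)).sum)) • wd F (l.eraseIdx i)
      else 0

/-- `X*_r`: the weighted deletion map, deleting an occurrence of the letter `x`
with weight `q^{⟨vₙ,x⟩+⋯+⟨v_{i+1},x⟩}`. -/
def lowR (q : F) (x : Ltr) : FA F →ₗ[F] FA F :=
  mkMap F fun l =>
    ∑ i ∈ Finset.range l.length,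
      if l[i]? = some x then
        (q ^ (((l.drop (i + 1)).map (fun y => brk y x)).sum)) • wd F (l.eraseIdx i)
      else 0

/-- `K`, the algebra automorphism of the free algebra `V` with `K(A) = q²A`, `K(B) = q⁻²B`;
on a word `v = v₁⋯vₙ` it acts as `K(v) = v·q^{⟨v₁,A⟩+⋯+⟨vₙ,A⟩}`. -/
def Kop (q : F) : FA F →ₗ[F] FA F :=
  mkMap F fun l => (q ^ ((l.map (fun y => brk y lA)).sum)) • wd F l

/-- `K⁻¹`; on a word `v = v₁⋯vₙ` it acts as `K⁻¹(v) = v·q^{⟨v₁,B⟩+⋯+⟨vₙ,B⟩}`. -/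
def Kinv (q : F) : FA F →ₗ[F] FA F :=
  mkMap F fun l => (q ^ ((l.map (fun y => brk y lB)).sum)) • wd F l

/-- `T`, the automorphism of the free algebra swapping `A` and `B`. -/
def Top : FA F →ₗ[F] FA F :=
  mkMap F fun l => wd F (l.map (fun x => if x = lA then lB else lA))

/-- `Â = Q(A_L − K B_R)` and `B̂ = Q(B_L − K⁻¹ A_R)` where `Q = 1 - q²`. -/
def hatOp (q : F) (a : Ltr) : FA F →ₗ[F] FA F :=
  if a = lA then (1 - q ^ 2) • (AL F - Kop F q ∘ₗ BR F)
  else (1 - q ^ 2) • (BL F - Kinv F q ∘ₗ AR F)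

def phiW (q : F) : List Ltr → FA F
  | [] => 1
  | a :: t => hatOp F q a (phiW q t)

/-- The map `φ`: `φ(1) = 1` and `φ(v₁⋯vₙ) = v̂₁v̂₂⋯v̂ₙ(1)`. -/
def phi (q : F) : FA F →ₗ[F] FA F := mkMap F fun l => phiW F q l

/-- `ψ = K B_R A*_L + K⁻¹ A_R B*_L`. -/
def psi (q : F) : FA F →ₗ[F] FA F :=
  Kop F q ∘ₗ BR F ∘ₗ delL F lA + Kinv F q ∘ₗ AR F ∘ₗ delL F lB

/-- `V_n`, the span of the words of length `n`. -/
def Vn (n : ℕ) : Submodule F (FA F) :=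
  Submodule.span F { x | ∃ l : List Ltr, l.length = n ∧ x = wd F l }

/-- `J⁺ = A³B − [3]_q A²BA + [3]_q ABA² − BA³`. -/
def Jp (q : F) : FA F :=
  Agen F ^ 3 * Bgen F - tri F q • (Agen F ^ 2 * Bgen F * Agen F)
    + tri F q • (Agen F * Bgen F * Agen F ^ 2) - Bgen F * Agen F ^ 3

/-- `J⁻ = B³A − [3]_q B²AB + [3]_q BAB² − AB³`. -/
def Jm (q : F) : FA F :=
  Bgen F ^ 3 * Agen F - tri F q • (Bgen F ^ 2 * Agen F * Bgen F)
    + tri F q • (Bgen F * Agen F * Bgen F ^ 2) - Agen F * Bgen F ^ 3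

/-- `J`, the two-sided ideal of the free algebra generated by `J⁺` and `J⁻`
(realized as the `F`-span of the elements `a·J^±·b`). -/
def Jsub (q : F) : Submodule F (FA F) :=
  Submodule.span F { x | ∃ a b : FA F, x = a * Jp F q * b ∨ x = a * Jm F q * b }

/-- `U`, the subalgebra of the q-shuffle algebra `(V,⋆)` generated by `A` and `B`,
realized as the span of all `⋆`-products of the letters. -/
def Usub (q : F) : Submodule F (FA F) :=
  Submodule.span F (Set.range fun l : List Ltr => thetaW F q l)

/-- A `□_q`-module structure on an `F`-vector space `M`: four operators
`x₀, x₁, x₂, x₃` (indices mod 4) satisfying the q-Weyl and q-Serre relations. -/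
structure SqAct (q : F) (M : Type*) [AddCommGroup M] [Module F M] where
  x : ZMod 4 → Module.End F M
  weyl : ∀ i : ZMod 4,
    q • (x i * x (i + 1)) - q⁻¹ • (x (i + 1) * x i) = (q - q⁻¹) • (1 : Module.End F M)
  serre : ∀ i : ZMod 4,
    x i ^ 3 * x (i + 2) - tri F q • (x i ^ 2 * x (i + 2) * x i)
      + tri F q • (x i * x (i + 2) * x i ^ 2) - x (i + 2) * x i ^ 3 = 0

variable {F} {q : F} {M : Type*} [AddCommGroup M] [Module F M]

/-- A `□_q`-module `M` is generated by `ξ` if no proper submodule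
(subspace invariant under all the `xᵢ`) contains `ξ`. -/
def SqAct.Gen (S : SqAct F q M) (ξ : M) : Prop :=
  ∀ W : Submodule F M, (∀ i : ZMod 4, ∀ m ∈ W, S.x i m ∈ W) → ξ ∈ W → W = ⊤

/-- `W_n`: the span of the vectors `u₁u₂⋯uₙ·ξ` with each `uᵢ ∈ {x₀, x₂}`. -/
def SqAct.Wn (S : SqAct F q M) (ξ : M) (n : ℕ) : Submodule F M :=
  Submodule.span F
    { m | ∃ l : List (ZMod 4), l.length = n ∧ (∀ i ∈ l, i = 0 ∨ i = 2) ∧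
        m = l.foldr (fun i acc => S.x i acc) ξ }

namespace Aux
variable (F : Type*) [Field F]

lemma mkMap_single {M : Type*} [AddCommMonoid M] [Module F M] (f : List Ltr → M)
    (w : FreeMonoid Ltr) (c : F) :
    mkMap F f (MonoidAlgebra.single w c) = c • f (FreeMonoid.toList w) := by
  rw [mkMap, LinearMap.comp_apply, LinearEquiv.coe_coe, MonoidAlgebra.coeffLinearEquiv_apply,
    MonoidAlgebra.coeff_single, Finsupp.lsum_single]
  rw [LinearMap.toSpanSingleton_apply]

lemma ofList_inj {t u : List Ltr} : FreeMonoid.ofList t = FreeMonoid.ofList u ↔ t = u :=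
  FreeMonoid.ofList.apply_eq_iff_eq

lemma single_apply' (a b : List Ltr) (c : F) :
    (Finsupp.single (FreeMonoid.ofList a) c : FreeMonoid Ltr →₀ F) (FreeMonoid.ofList b)
      = if a = b then c else 0 := by
  by_cases h : a = b
  · subst h; rw [if_pos rfl, Finsupp.single_eq_same]
  · rw [if_neg h, Finsupp.single_eq_of_ne' (fun hh => h (ofList_inj.mp hh))]

lemma one_eq_ofList : (1 : FreeMonoid Ltr) = FreeMonoid.ofList [] := rfl

lemma of_mul_ofList (y : Ltr) (t : List Ltr) :
    FreeMonoid.of y * FreeMonoid.ofList t = FreeMonoid.ofList (y :: t) := rfl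

lemma coeff_delL (x : Ltr) (v : FA F) (u : List Ltr) :
    fsp F (delL F x v) (FreeMonoid.ofList u) = fsp F v (FreeMonoid.ofList (x :: u)) := by
  induction v using MonoidAlgebra.induction_linear with
  | zero => simp [fsp, map_zero]
  | add f g hf hg =>
      have h : delL F x (f + g) = delL F x f + delL F x g := map_add _ _ _
      simp only [fsp] at *
      rw [h, MonoidAlgebra.coeff_add, MonoidAlgebra.coeff_add, Finsupp.add_apply, Finsupp.add_apply,
        hf, hg]
  | single w c =>
      show fsp F (delL F x (MonoidAlgebra.single (FreeMonoid.ofList (FreeMonoid.toList w)) c))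
            (FreeMonoid.ofList u)
          = fsp F (MonoidAlgebra.single (FreeMonoid.ofList (FreeMonoid.toList w)) c)
            (FreeMonoid.ofList (x :: u))
      generalize FreeMonoid.toList w = l
      rw [delL, mkMap_single]
      cases l with
      | nil =>
          simp only [fsp, wd, MonoidAlgebra.coeff_single, FreeMonoid.toList_ofList,
            List.head?_nil, reduceCtorEq, if_false, smul_zero, MonoidAlgebra.coeff_zero,
            Finsupp.coe_zero, Pi.zero_apply]
          exact ((single_apply' F [] (x :: u) c).trans (if_neg (by simp))).symm
      | cons y t =>
          simp only [fsp, wd, MonoidAlgebra.coeff_single, FreeMonoid.toList_ofList,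
            List.head?_cons, List.tail_cons, Option.some.injEq]
          by_cases hy : y = x
          · subst hy
            rw [if_pos rfl, MonoidAlgebra.smul_single', mul_one, MonoidAlgebra.coeff_single,
              single_apply' F t u c, single_apply' F (y :: t) (y :: u) c]
            by_cases htu : t = u <;> simp [htu]
          · rw [if_neg hy, smul_zero, MonoidAlgebra.coeff_zero, Finsupp.zero_apply,
              single_apply' F (y :: t) (x :: u) c, if_neg (by simp [hy])]

def delWord : List Ltr → FA F → FA F
  | [], v => v
  | x :: t, v => delWord t (delL F x v)

lemma coeff_delWord (l : List Ltr) (v : FA F) (u : List Ltr) :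
    fsp F (delWord F l v) (FreeMonoid.ofList u) = fsp F v (FreeMonoid.ofList (l ++ u)) := by
  induction l generalizing v with
  | nil => rfl
  | cons x t ih =>
      show fsp F (delWord F t (delL F x v)) (FreeMonoid.ofList u) = _
      rw [ih, coeff_delL]
      rfl

lemma delWord_mem (W : Submodule F (FA F))
    (hA : ∀ v ∈ W, delL F lA v ∈ W) (hB : ∀ v ∈ W, delL F lB v ∈ W) :
    ∀ l : List Ltr, ∀ v ∈ W, delWord F l v ∈ W := by
  intro l
  induction l with
  | nil => intro v hv; exact hv
  | cons x t ih =>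
      intro v hv
      refine ih (delL F x v) ?_
      fin_cases x
      · exact hA v hv
      · exact hB v hv

lemma eq_smul_one (v : FA F)
    (h : ∀ (x : Ltr) (u : List Ltr), fsp F v (FreeMonoid.ofList (x :: u)) = 0) :
    v = fsp F v (FreeMonoid.ofList []) • wd F [] := by
  apply MonoidAlgebra.ext
  apply Finsupp.ext
  intro w
  have hv : fsp F v (FreeMonoid.ofList []) • wd F []
      = MonoidAlgebra.single (FreeMonoid.ofList ([] : List Ltr))
          (fsp F v (FreeMonoid.ofList [])) := by
    rw [wd, MonoidAlgebra.smul_single', mul_one]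
  show fsp F v w = fsp F (fsp F v (FreeMonoid.ofList []) • wd F []) w
  rw [hv]
  show fsp F v (FreeMonoid.ofList (FreeMonoid.toList w)) = _
  show _ = (Finsupp.single (FreeMonoid.ofList ([] : List Ltr))
      (fsp F v (FreeMonoid.ofList []))) (FreeMonoid.ofList (FreeMonoid.toList w))
  generalize FreeMonoid.toList w = l
  rw [single_apply' F]
  cases l with
  | nil => simp
  | cons y t => rw [h y t, if_neg (by simp)]

lemma delL_wd_nil (x : Ltr) : delL F x (wd F []) = 0 := by
  rw [wd, delL, mkMap_single]
  simp [FreeMonoid.toList_ofList]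

lemma one_eq_wd_nil : (1 : FA F) = wd F [] := rfl

end Aux
end SqPaper
open SqPaper in
/-- any nonzero subspace of `V` invariant under `A*_L` and `B*_L`
contains `1`; moreover `A*_L(v) = 0 = B*_L(v)` iff `v ∈ V₀ = F·1`. -/
theorem delL_invariant_subspace (F : Type*) [Field F] (q : F) (hq : q ≠ 0)
    (hq1 : ∀ k : ℕ, 0 < k → q ^ k ≠ 1) :
    (∀ W : Submodule F (FA F), W ≠ ⊥ →
      (∀ v ∈ W, delL F lA v ∈ W) → (∀ v ∈ W, delL F lB v ∈ W) → (1 : FA F) ∈ W) ∧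
      (∀ v : FA F, (delL F lA v = 0 ∧ delL F lB v = 0) ↔ v ∈ Vn F 0) := by
  constructor
  · intro W hW hA hB
    obtain ⟨v, hvW, hv0⟩ := Submodule.exists_mem_ne_zero_of_ne_bot hW
    have hsupp : (fsp F v).support.Nonempty := by
      rw [Finsupp.support_nonempty_iff]
      exact fun h => hv0 (MonoidAlgebra.coeff_eq_zero.mp h)
    obtain ⟨w, hw, hmax⟩ := (fsp F v).support.exists_max_image
      (fun a => (FreeMonoid.toList a).length) hsupp
    set v' := Aux.delWord F (FreeMonoid.toList w) v with hv'
    have hv'W : v' ∈ W := Aux.delWord_mem F W hA hB _ v hvW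
    have hc : fsp F v' (FreeMonoid.ofList []) = fsp F v w := by
      rw [Aux.coeff_delWord, List.append_nil, FreeMonoid.ofList_toList]
    have hcne : fsp F v w ≠ 0 := Finsupp.mem_support_iff.mp hw
    have hzero : ∀ (x : Ltr) (u : List Ltr), fsp F v' (FreeMonoid.ofList (x :: u)) = 0 := by
      intro x u
      rw [Aux.coeff_delWord]
      by_contra hne
      have hmem : FreeMonoid.ofList (FreeMonoid.toList w ++ x :: u) ∈ (fsp F v).support :=
        Finsupp.mem_support_iff.mpr hne
      have := hmax _ hmem
      simp [FreeMonoid.toList_ofList] at this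
    have heq : v' = fsp F v w • wd F [] := by
      have := Aux.eq_smul_one F v' hzero
      rwa [hc] at this
    have hwd : wd F [] ∈ W := by
      have := W.smul_mem (fsp F v w)⁻¹ hv'W
      rwa [heq, smul_smul, inv_mul_cancel₀ hcne, one_smul] at this
    rwa [Aux.one_eq_wd_nil]
  · intro v
    constructor
    · rintro ⟨hA, hB⟩
      have hzero : ∀ (x : Ltr) (u : List Ltr), fsp F v (FreeMonoid.ofList (x :: u)) = 0 := by
        intro x u
        have h0 : delL F x v = 0 := by fin_cases x <;> assumption
        have := Aux.coeff_delL F x v u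
        rw [h0] at this
        simpa [fsp] using this.symm
      rw [Aux.eq_smul_one F v hzero]
      exact Submodule.smul_mem _ _ (Submodule.subset_span ⟨[], rfl, rfl⟩)
    · intro hv
      have key : ∀ x : Ltr, ∀ u ∈ Vn F 0, delL F x u = 0 := by
        intro x u hu
        induction hu using Submodule.span_induction with
        | mem g hg =>
            obtain ⟨l, hl, rfl⟩ := hg
            rw [List.length_eq_zero_iff.mp hl]
            exact Aux.delL_wd_nil F x
        | zero => exact map_zero _
        | add a b _ _ ha hb => rw [map_add, ha, hb, add_zero]
        | smul c a _ ha => rw [map_smul, ha, smul_zero]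
      exact ⟨key lA v hv, key lB v hv⟩
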